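/- The relaxed Tree-Wasserstein distance W(μ, ν) = ∑_{v ∈ X} w_v |∑_{x ∈ X_leaf} α_{vx}(μ(x) − ν(x))|, with w_v ≥ 0 and α_{vx} ∈ [0,1], is a negative definite kernel on the set of probability measures on X_leaf: for any measures μ_1,...,μ_n and reals c_1,...,c_n with ∑ c_i = 0, ∑_{i,j} c_i c_j W(μ_i, μ_j) ≤ 0. -/

import Mathlib

open MeasureTheory

lemma min_psd_aux {n : ℕ} (b : Fin n → ℝ) (hb : ∀ i, 0 ≤ b i) (c : Fin n → ℝ) :
    0 ≤ ∑ i, ∑ j, c i * c j * min (b i) (b j) := by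
  classical
  set f : Fin n → ℝ → ℝ := fun i => (Set.Ioc (0:ℝ) (b i)).indicator 1 with hf
  have key : ∀ i j t, f i t * f j t
      = (Set.Ioc (0:ℝ) (min (b i) (b j))).indicator (1 : ℝ → ℝ) t := by
    intro i j t
    simp only [hf, Set.indicator_apply, Set.mem_Ioc, Pi.one_apply, le_min_iff]
    by_cases h1 : 0 < t <;> by_cases h2 : t ≤ b i <;> by_cases h3 : t ≤ b j <;>
      simp [h1, h2, h3]
  have hfint : ∀ r : ℝ, Integrable ((Set.Ioc (0:ℝ) r).indicator (1 : ℝ → ℝ)) := by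
    intro r
    rw [integrable_indicator_iff measurableSet_Ioc]
    exact integrableOn_const measure_Ioc_lt_top.ne
  have hintval : ∀ r : ℝ, 0 ≤ r →
      ∫ t, (Set.Ioc (0:ℝ) r).indicator (1 : ℝ → ℝ) t = r := by
    intro r hr
    rw [MeasureTheory.integral_indicator_one measurableSet_Ioc, Real.volume_real_Ioc_of_le hr,
      sub_zero]
  have h1 : ∀ t, (∑ i, c i * f i t)^2
      = ∑ i, ∑ j, (c i * c j) * ((Set.Ioc (0:ℝ) (min (b i) (b j))).indicator (1:ℝ→ℝ) t) := by
    intro t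
    rw [sq, Finset.sum_mul_sum]
    refine Finset.sum_congr rfl fun i _ => Finset.sum_congr rfl fun j _ => ?_
    rw [← key i j t]; ring
  calc (0:ℝ) ≤ ∫ t, (∑ i, c i * f i t)^2 := integral_nonneg fun t => sq_nonneg _
    _ = ∑ i, ∑ j, c i * c j * min (b i) (b j) := by
        simp_rw [h1]
        rw [integral_finset_sum _ (fun i _ => integrable_finset_sum _
          (fun j _ => (hfint _).const_mul _))]
        refine Finset.sum_congr rfl fun i _ => ?_
        rw [integral_finset_sum _ (fun j _ => (hfint _).const_mul _)]
        refine Finset.sum_congr rfl fun j _ => ?_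
        rw [MeasureTheory.integral_const_mul, hintval _ (le_min (hb i) (hb j))]

lemma negdef_abs {n : ℕ} (a c : Fin n → ℝ) (hc : ∑ i, c i = 0) :
    ∑ i, ∑ j, c i * c j * |a i - a j| ≤ 0 := by
  rcases Nat.eq_zero_or_pos n with h | h
  · subst h; simp
  · have hne : Nonempty (Fin n) := Fin.pos_iff_nonempty.1 h
    set m := Finset.univ.inf' Finset.univ_nonempty a with hm
    set b := fun i => a i - m with hbdef
    have hb : ∀ i, 0 ≤ b i := fun i => sub_nonneg.2 (Finset.inf'_le _ (Finset.mem_univ i))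
    have habs : ∀ i j, |a i - a j| = b i + b j - 2 * min (b i) (b j) := by
      intro i j
      have hd : a i - a j = b i - b j := by show a i - a j = (a i - m) - (a j - m); ring
      rw [hd]
      rcases le_total (b i) (b j) with hle | hle
      · rw [min_eq_left hle, abs_of_nonpos (by linarith)]; ring
      · rw [min_eq_right hle, abs_of_nonneg (by linarith)]; ring
    have key : ∑ i, ∑ j, (c i * c j * |a i - a j| + 2 * (c i * c j * min (b i) (b j)))
        = (∑ i, c i * b i) * (∑ j, c j) + (∑ i, c i) * (∑ j, c j * b j) := by
      rw [Finset.sum_mul_sum, Finset.sum_mul_sum, ← Finset.sum_add_distrib]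
      refine Finset.sum_congr rfl fun i _ => ?_
      rw [← Finset.sum_add_distrib]
      refine Finset.sum_congr rfl fun j _ => ?_
      rw [habs]; ring
    have hsplit : ∑ i, ∑ j, (c i * c j * |a i - a j| + 2 * (c i * c j * min (b i) (b j)))
        = (∑ i, ∑ j, c i * c j * |a i - a j|)
          + 2 * ∑ i, ∑ j, c i * c j * min (b i) (b j) := by
      simp_rw [Finset.sum_add_distrib, Finset.mul_sum]
    rw [hc] at key
    simp only [mul_zero, zero_mul, add_zero, zero_add] at key
    have hmin := min_psd_aux b hb c
    linarith [key, hsplit, hmin]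

/-- the relaxed Tree-Wasserstein distance
`W(μ,ν) = ∑_v w_v |∑_x α_{vx}(μ x - ν x)|` (with `w ≥ 0`, `α ∈ [0,1]`) is a negative
definite kernel on probability measures on the leaf set: for any probability measures
`μ₁,…,μₙ` and reals `c₁,…,cₙ` with `∑ cᵢ = 0`, `∑_{i,j} cᵢ cⱼ W(μᵢ, μⱼ) ≤ 0`. -/
theorem stmt10 {V L : Type*} [Fintype V] [Fintype L]
    (α : V → L → ℝ) (hα : ∀ v x, α v x ∈ Set.Icc (0 : ℝ) 1)
    (w : V → ℝ) (hw : ∀ v, 0 ≤ w v)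
    (n : ℕ) (μ : Fin n → L → ℝ)
    (hμ0 : ∀ i x, 0 ≤ μ i x) (hμ1 : ∀ i, ∑ x, μ i x = 1)
    (c : Fin n → ℝ) (hc : ∑ i, c i = 0) :
    ∑ i, ∑ j, c i * c j * (∑ v, w v * |∑ x, α v x * (μ i x - μ j x)|) ≤ 0 := by
  have hg : ∀ (v : V) (i j : Fin n), ∑ x, α v x * (μ i x - μ j x)
      = (∑ x, α v x * μ i x) - (∑ x, α v x * μ j x) := by
    intro v i j
    rw [← Finset.sum_sub_distrib]
    exact Finset.sum_congr rfl fun x _ => by ring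
  simp_rw [hg, Finset.mul_sum]
  calc ∑ i, ∑ j, ∑ v, c i * c j *
          (w v * |(∑ x, α v x * μ i x) - (∑ x, α v x * μ j x)|)
      = ∑ i, ∑ v, ∑ j, c i * c j *
          (w v * |(∑ x, α v x * μ i x) - (∑ x, α v x * μ j x)|) :=
        Finset.sum_congr rfl fun i _ => Finset.sum_comm ..
    _ = ∑ v, ∑ i, ∑ j, c i * c j *
          (w v * |(∑ x, α v x * μ i x) - (∑ x, α v x * μ j x)|) :=
        Finset.sum_comm ..
    _ ≤ 0 := by
        refine Finset.sum_nonpos fun v _ => ?_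
        have heq : ∑ i, ∑ j, c i * c j *
              (w v * |(∑ x, α v x * μ i x) - (∑ x, α v x * μ j x)|)
            = w v * ∑ i, ∑ j, c i * c j *
              |(∑ x, α v x * μ i x) - (∑ x, α v x * μ j x)| := by
          rw [Finset.mul_sum]
          refine Finset.sum_congr rfl fun i _ => ?_
          rw [Finset.mul_sum]
          refine Finset.sum_congr rfl fun j _ => ?_
          ring
        rw [heq]
        exact mul_nonpos_of_nonneg_of_nonpos (hw v)
          (negdef_abs (fun i => ∑ x, α v x * μ i x) c hc)
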